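/- For any open convex set Ω₀ ⊆ ℝ² that does not contain any line and any δ > 0, there exists a C²-smooth function E_δ defined on an open set containing cl Ω₀ whose Hessian is strictly negative definite at every point of cl Ω₀ (in particular E_δ is strictly concave there) and which satisfies 0 < E_δ(x) < δ for every x ∈ cl Ω₀. -/

import Mathlib

open Set

noncomputable section

/-- `Euc d` is the Euclidean space `ℝ^d`. -/
abbrev Euc (d : ℕ) := EuclideanSpace ℝ (Fin d)

/-- The set `s` contains no (full) line. -/
def ContainsNoLine (s : Set (Euc 2)) : Prop :=
  ¬ ∃ x v : Euc 2, v ≠ 0 ∧ ∀ t : ℝ, x + t • v ∈ s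

open scoped RealInnerProductSpace

def perp (u : Euc 2) : Euc 2 := !₂[-(u 1), u 0]

theorem perp_inner (u v : Euc 2) : ⟪perp u, v⟫ = -(u 1) * v 0 + u 0 * v 1 := by
  simp [perp, PiLp.inner_apply, Fin.sum_univ_two]
  ring

theorem perp_ne_zero {u : Euc 2} (hu : u ≠ 0) : perp u ≠ 0 := by
  intro h
  apply hu
  have h0 := congrArg (· 0) h
  have h1 := congrArg (· 1) h
  simp [perp] at h0 h1
  ext i
  fin_cases i
  · exact h1
  · exact h0

theorem perp_spans {u v : Euc 2} (hu : u ≠ 0) (h1 : ⟪u, v⟫ = 0) (h2 : ⟪perp u, v⟫ = 0) :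
    v = 0 := by
  have hn : ‖u‖ ≠ 0 := norm_ne_zero_iff.2 hu
  have hsq : ⟪u, u⟫ ≠ 0 := by
    rw [real_inner_self_eq_norm_sq]; positivity
  simp only [perp, PiLp.inner_apply, RCLike.inner_apply, starRingEnd_apply, star_trivial,
    Fin.sum_univ_two, WithLp.ofLp_toLp, Matrix.cons_val_zero, Matrix.cons_val_one, Matrix.head_cons] at h1 h2 hsq
  have e0 : (u 0 * u 0 + u 1 * u 1) * v 0 = 0 := by linear_combination u 0 * h1 - u 1 * h2
  have e1 : (u 0 * u 0 + u 1 * u 1) * v 1 = 0 := by linear_combination u 1 * h1 + u 0 * h2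
  have h0 : v 0 = 0 := by rcases mul_eq_zero.1 e0 with h | h; exact absurd h hsq; exact h
  have h1' : v 1 = 0 := by rcases mul_eq_zero.1 e1 with h | h; exact absurd h hsq; exact h
  ext i
  fin_cases i
  · exact h0
  · exact h1'

/-- Lemma A: unbounded direction gives a recession direction of the closure. -/
theorem lemA {Ω₀ : Set (Euc 2)} (hconv : Convex ℝ Ω₀) {x₀ : Euc 2} (hx₀ : x₀ ∈ Ω₀)
    {u : Euc 2} (hu : ¬ BddAbove ((fun x => ⟪u, x⟫) '' Ω₀)) :
    ∃ d : Euc 2, ‖d‖ = 1 ∧ 0 ≤ ⟪u, d⟫ ∧ ∀ t : ℝ, 0 ≤ t → x₀ + t • d ∈ closure Ω₀ := by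
  rw [not_bddAbove_iff] at hu
  have hu0 : u ≠ 0 := by
    rintro rfl
    obtain ⟨y, ⟨x, hx, rfl⟩, hy⟩ := hu 0
    simp at hy
  -- choose points with large inner product
  have hsel : ∀ n : ℕ, ∃ z ∈ Ω₀, (n : ℝ) < ⟪u, z - x₀⟫ := by
    intro n
    obtain ⟨y, ⟨z, hz, rfl⟩, hy⟩ := hu ((n : ℝ) + ⟪u, x₀⟫)
    exact ⟨z, hz, by rw [inner_sub_right]; linarith⟩
  choose z hzΩ hzlt using hsel
  set r : ℕ → ℝ := fun n => ‖z n - x₀‖ with hr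
  have hrpos : ∀ n, 0 < r n := by
    intro n
    have h1 : (0:ℝ) < ⟪u, z n - x₀⟫ := lt_of_le_of_lt (Nat.cast_nonneg n) (hzlt n)
    have : z n - x₀ ≠ 0 := by
      intro h; rw [h, inner_zero_right] at h1; exact lt_irrefl _ h1
    simpa [hr] using norm_pos_iff.2 this
  have hrlarge : ∀ n : ℕ, (n : ℝ) / ‖u‖ ≤ r n := by
    intro n
    have := (real_inner_le_norm u (z n - x₀))
    have hn := (hzlt n).le
    rw [div_le_iff₀ (norm_pos_iff.2 hu0)]
    calc (n:ℝ) ≤ ⟪u, z n - x₀⟫ := hn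
    _ ≤ ‖u‖ * ‖z n - x₀‖ := this
    _ = r n * ‖u‖ := by ring
  set y : ℕ → Euc 2 := fun n => (r n)⁻¹ • (z n - x₀) with hy
  have hysph : ∀ n, y n ∈ Metric.sphere (0 : Euc 2) 1 := by
    intro n
    rw [mem_sphere_zero_iff_norm, hy]
    simp only [norm_smul, norm_inv, Real.norm_eq_abs]
    rw [abs_of_pos (hrpos n), inv_mul_cancel₀ (hrpos n).ne']
  obtain ⟨d, hdsph, φ, hφ, hlim⟩ :=
    (isCompact_sphere (0 : Euc 2) 1).tendsto_subseq hysph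
  have hd1 : ‖d‖ = 1 := mem_sphere_zero_iff_norm.1 hdsph
  have hmem : ∀ t : ℝ, 0 ≤ t → ∀ n, t ≤ r n → x₀ + t • y n ∈ Ω₀ := by
    intro t ht n htn
    have hs0 : 0 ≤ t / r n := div_nonneg ht (hrpos n).le
    have hs1 : t / r n ≤ 1 := (div_le_one (hrpos n)).2 htn
    have := hconv hx₀ (hzΩ n) (by linarith : (0:ℝ) ≤ 1 - t / r n) hs0 (by ring)
    convert this using 1
    rw [hy, smul_smul]
    field_simp
    module
  refine ⟨d, hd1, ?_, ?_⟩
  · have hcont : Filter.Tendsto (fun k => ⟪u, y (φ k)⟫) Filter.atTop (nhds ⟪u, d⟫) :=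
      (Filter.Tendsto.inner tendsto_const_nhds hlim)
    refine ge_of_tendsto hcont (Filter.Eventually.of_forall fun k => ?_)
    rw [hy]
    simp only [inner_smul_right]
    have h1 : (0:ℝ) ≤ ⟪u, z (φ k) - x₀⟫ :=
      le_of_lt (lt_of_le_of_lt (Nat.cast_nonneg _) (hzlt (φ k)))
    exact mul_nonneg (inv_nonneg.2 (hrpos _).le) h1
  · intro t ht
    have hcont : Filter.Tendsto (fun k => x₀ + t • y (φ k)) Filter.atTop
        (nhds (x₀ + t • d)) := by
      exact Filter.Tendsto.const_add _ (hlim.const_smul t)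
    refine mem_closure_of_tendsto hcont ?_
    have : ∀ᶠ k : ℕ in Filter.atTop, t ≤ r (φ k) := by
      rw [Filter.eventually_atTop]
      refine ⟨⌈t * ‖u‖⌉₊, fun k hk => ?_⟩
      have hup : 0 < ‖u‖ := norm_pos_iff.2 hu0
      have h1 : t * ‖u‖ ≤ (k : ℝ) := le_trans (Nat.le_ceil _) (Nat.cast_le.2 hk)
      have h2 : (k : ℝ) ≤ (φ k : ℝ) := Nat.cast_le.2 (hφ.le_apply)
      have h3 : t ≤ (φ k : ℝ) / ‖u‖ := by
        rw [le_div_iff₀ hup]; linarith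
      exact le_trans h3 (hrlarge (φ k))
    exact this.mono fun k hk => hmem t ht (φ k) hk

theorem expDerivAt (a b : ℝ) (t : ℝ) :
    HasDerivAt (fun t : ℝ => Real.exp (a*t+b)) (a * Real.exp (a*t+b)) t := by
  have h1 : HasDerivAt (fun t : ℝ => a*t+b) a t := by
    simpa using ((hasDerivAt_id t).const_mul a).add_const b
  simpa [mul_comm] using h1.exp

theorem second_deriv_formula (c a₁ b₁ a₂ b₂ : ℝ) :
    deriv (deriv (fun t : ℝ => c * (2 - Real.exp (a₁*t + b₁) - Real.exp (a₂*t + b₂)))) 0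
      = c * (-(a₁^2 * Real.exp b₁) - a₂^2 * Real.exp b₂) := by
  have h1 : deriv (fun t : ℝ => c * (2 - Real.exp (a₁*t + b₁) - Real.exp (a₂*t + b₂)))
      = fun t => c * (-(a₁ * Real.exp (a₁*t+b₁)) - a₂ * Real.exp (a₂*t+b₂)) := by
    funext t
    have := ((((expDerivAt a₁ b₁ t).const_sub 2).sub (expDerivAt a₂ b₂ t)).const_mul c)
    simpa using this.deriv
  rw [h1]
  have h2 := ((((expDerivAt a₁ b₁ 0).const_mul a₁).const_sub 0).sub
      ((expDerivAt a₂ b₂ 0).const_mul a₂)).const_mul c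
  have h3 := h2.deriv
  have he : ∀ b : ℝ, a₁ * 0 + b = b := by intro b; ring
  have he' : ∀ b : ℝ, a₂ * 0 + b = b := by intro b; ring
  calc deriv (fun t => c * (-(a₁ * Real.exp (a₁*t+b₁)) - a₂ * Real.exp (a₂*t+b₂))) 0
      = deriv (fun t => c * (0 - a₁ * Real.exp (a₁*t+b₁) - a₂ * Real.exp (a₂*t+b₂))) 0 := by
        congr 1; funext t; ring_nf
    _ = c * (-(a₁ * (a₁ * Real.exp (a₁*0+b₁))) - a₂ * (a₂ * Real.exp (a₂*0+b₂))) := h3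
    _ = c * (-(a₁^2 * Real.exp b₁) - a₂^2 * Real.exp b₂) := by
        rw [he b₁, he' b₂]; ring

theorem lemB {Ω₀ : Set (Euc 2)} (h0open : IsOpen Ω₀) (h0conv : Convex ℝ Ω₀)
    (h0line : ContainsNoLine Ω₀) {x₀ : Euc 2} (hx₀ : x₀ ∈ Ω₀) :
    ∃ u₁ u₂ : Euc 2,
      (∀ v : Euc 2, ⟪u₁, v⟫ = 0 → ⟪u₂, v⟫ = 0 → v = 0) ∧
      BddAbove ((fun x => ⟪u₁, x⟫) '' Ω₀) ∧ BddAbove ((fun x => ⟪u₂, x⟫) '' Ω₀) := by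
  classical
  have hx₀c : x₀ ∈ closure Ω₀ := subset_closure hx₀
  -- the recession cone of `closure Ω₀` at `x₀`
  set K : ConvexCone ℝ (Euc 2) :=
    { carrier := {v | ∀ t : ℝ, 0 ≤ t → x₀ + t • v ∈ closure Ω₀}
      smul_mem' := by
        intro c hc v hv t ht
        have := hv (t * c) (mul_nonneg ht hc.le)
        rwa [show x₀ + t • c • v = x₀ + (t * c) • v by rw [smul_smul]]
      add_mem' := by
        intro v hv w hw t ht
        have h1 := hv (2 * t) (by linarith)
        have h2 := hw (2 * t) (by linarith)
        have := (h0conv.closure) h1 h2 (by norm_num : (0:ℝ) ≤ 1/2)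
          (by norm_num : (0:ℝ) ≤ 1/2) (by norm_num)
        convert this using 1
        module } with hK
  have hKmem : ∀ v : Euc 2, v ∈ K ↔ ∀ t : ℝ, 0 ≤ t → x₀ + t • v ∈ closure Ω₀ := fun v => Iff.rfl
  have hKclosed : IsClosed (K : Set (Euc 2)) := by
    have he : (K : Set (Euc 2)) = ⋂ (t : ℝ), ⋂ (_ : 0 ≤ t), (fun v => x₀ + t • v) ⁻¹' closure Ω₀ := by
      ext v
      simp only [SetLike.mem_coe, hKmem, mem_iInter, mem_preimage]
    rw [he]
    exact isClosed_iInter fun t => isClosed_iInter fun ht =>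
      IsClosed.preimage (continuous_const.add (continuous_const_smul t)) isClosed_closure
  have hKne : ((K : Set (Euc 2))).Nonempty := ⟨0, fun t ht => by simpa using hx₀c⟩
  -- pointedness
  have hpt : ∀ v : Euc 2, v ∈ K → -v ∈ K → v = 0 := by
    intro v hv hnv
    by_contra hv0
    refine h0line ⟨x₀, v, hv0, fun t => ?_⟩
    have hcl : x₀ + (2 * t) • v ∈ closure Ω₀ := by
      rcases le_or_gt 0 t with ht | ht
      · exact hv (2 * t) (by linarith)
      · have := hnv (2 * (-t)) (by linarith)
        convert this using 2
        module
    have hmem := h0conv.combo_interior_closure_mem_interior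
      (by rw [h0open.interior_eq]; exact hx₀) hcl (by norm_num : (0:ℝ) < 1/2)
      (by norm_num : (0:ℝ) ≤ 1/2) (by norm_num)
    rw [h0open.interior_eq] at hmem
    convert hmem using 1
    module
  -- bounded functional from strict negativity on K
  have hbdd : ∀ u : Euc 2, (∀ d : Euc 2, d ∈ K → d ≠ 0 → 0 < ⟪-u, d⟫) →
      BddAbove ((fun x => ⟪u, x⟫) '' Ω₀) := by
    intro u hu
    by_contra hnb
    obtain ⟨d, hd1, hd2, hd3⟩ := lemA h0conv hx₀ hnb
    have hdK : d ∈ K := hd3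
    have hd0 : d ≠ 0 := by intro h; rw [h, norm_zero] at hd1; norm_num at hd1
    have := hu d hdK hd0
    rw [inner_neg_left] at this
    linarith
  by_cases hKtriv : ∀ v : Euc 2, v ∈ K → v = 0
  · -- trivial cone: every functional is bounded
    refine ⟨EuclideanSpace.single 0 1, EuclideanSpace.single 1 1, ?_, ?_, ?_⟩
    · intro v h1 h2
      rw [EuclideanSpace.inner_single_left] at h1 h2
      simp at h1 h2
      ext i; fin_cases i
      · exact h1
      · exact h2
    · exact hbdd _ (fun d hd hd0 => absurd (hKtriv d hd) hd0)
    · exact hbdd _ (fun d hd hd0 => absurd (hKtriv d hd) hd0)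
  push_neg at hKtriv
  obtain ⟨d₀, hd₀K, hd₀0⟩ := hKtriv
  -- the dual cone has nonempty interior
  set D : Set (Euc 2) := (ProperCone.innerDual (K : Set (Euc 2)) : Set (Euc 2)) with hD
  have hDK : ∀ y ∈ D, ∀ x ∈ K, (0:ℝ) ≤ ⟪x, y⟫ := by
    intro y hy x hx
    exact (ProperCone.mem_innerDual.1 hy) hx
  have h0D : (0 : Euc 2) ∈ D := ProperCone.mem_innerDual.2 fun x _ => by rw [inner_zero_right]
  have hint : (interior D).Nonempty := by
    by_contra hemp
    rw [not_nonempty_iff_eq_empty] at hemp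
    -- then D spans a proper subspace; get a vector orthogonal to D
    have hW : Submodule.span ℝ D ≠ ⊤ := by
      intro htop
      have haff : affineSpan ℝ D = ⊤ := by
        rw [AffineSubspace.affineSpan_eq_top_iff_vectorSpan_eq_top_of_nonempty ℝ (Euc 2) (Euc 2)
          ⟨0, h0D⟩]
        refine top_unique ?_
        rw [← htop, Submodule.span_le]
        intro y hy
        have := vsub_mem_vectorSpan ℝ (p₁ := y) (p₂ := 0) hy h0D
        simpa using this
      have := ((ProperCone.innerDual (K : Set (Euc 2))).convex.interior_nonempty_iff_affineSpan_eq_top).2 haff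
      rw [← hD] at this
      exact absurd hemp (Set.nonempty_iff_ne_empty.1 this)
    have hWperp : (Submodule.span ℝ D)ᗮ ≠ ⊥ := by
      rwa [Ne, Submodule.orthogonal_eq_bot_iff]
    obtain ⟨v, hvW, hv0⟩ := (Submodule.ne_bot_iff _).1 hWperp
    -- v and -v are in the double dual = K
    have hdd : (ProperCone.innerDual (ProperCone.innerDual (K : Set (Euc 2)) : Set (Euc 2)) :
        Set (Euc 2)) = K := by
      have hK0 : K.Pointed := (hKmem 0).2 fun t ht => by simpa using hx₀c
      have := ProperCone.innerDual_innerDual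
        ({ toSubmodule := K.toPointedCone hK0, isClosed' := hKclosed } : ProperCone ℝ (Euc 2))
      exact congrArg (fun C : ProperCone ℝ (Euc 2) => (C : Set (Euc 2))) this
    have hmemv : ∀ w : Euc 2, (∀ y ∈ D, ⟪y, w⟫ = (0:ℝ)) → w ∈ K := by
      intro w hw
      have h2 : w ∈ (ProperCone.innerDual D : Set (Euc 2)) := ProperCone.mem_innerDual.2 fun y hy => (hw y hy).ge
      rw [hD] at h2
      rw [hdd] at h2
      exact h2
    have hvK : v ∈ K := hmemv v (fun y hy =>
      Submodule.inner_right_of_mem_orthogonal (Submodule.subset_span hy) hvW)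
    have hnvK : -v ∈ K := hmemv (-v) (fun y hy => by
      rw [inner_neg_right, Submodule.inner_right_of_mem_orthogonal (Submodule.subset_span hy) hvW, neg_zero])
    exact hv0 (hpt v hvK hnvK)
  obtain ⟨u₀, hu₀⟩ := hint
  obtain ⟨ε, hε, hball⟩ := Metric.isOpen_iff.1 isOpen_interior u₀ hu₀
  have hballD : Metric.ball u₀ ε ⊆ D := fun y hy => interior_subset (hball hy)
  -- strict positivity of perturbed functionals on K \ {0}
  have hpos : ∀ w : Euc 2, ‖w‖ ≤ ε/2 → ∀ d : Euc 2, d ∈ K → d ≠ 0 → 0 < ⟪u₀ + w, d⟫ := by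
    intro w hw d hdK hd0
    have hdn : (0:ℝ) < ‖d‖ := norm_pos_iff.2 hd0
    set d' : Euc 2 := ‖d‖⁻¹ • d with hd'
    have hd'K : d' ∈ K := K.smul_mem (inv_pos.2 hdn) hdK
    have hd'n : ‖d'‖ = 1 := by
      rw [hd', norm_smul, norm_inv, norm_norm, inv_mul_cancel₀ hdn.ne']
    have hmemball : u₀ + w - (ε/4) • d' ∈ Metric.ball u₀ ε := by
      rw [Metric.mem_ball, dist_eq_norm]
      have : u₀ + w - (ε/4) • d' - u₀ = w - (ε/4) • d' := by module
      rw [this]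
      calc ‖w - (ε/4) • d'‖ ≤ ‖w‖ + ‖(ε/4) • d'‖ := norm_sub_le _ _
      _ ≤ ε/2 + ε/4 := by
          rw [norm_smul, hd'n, mul_one, Real.norm_eq_abs, abs_of_pos (by linarith : (0:ℝ) < ε/4)]
          linarith
      _ < ε := by linarith
    have h1 : (0:ℝ) ≤ ⟪d', u₀ + w - (ε/4) • d'⟫ := hDK _ (hballD hmemball) d' hd'K
    rw [inner_sub_right, real_inner_smul_right, real_inner_self_eq_norm_sq, hd'n] at h1
    have h2 : (0:ℝ) < ⟪d', u₀ + w⟫ := by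
      simp only [one_pow, mul_one] at h1
      linarith
    have h3 : ⟪u₀ + w, d⟫ = ‖d‖ * ⟪d', u₀ + w⟫ := by
      rw [hd', real_inner_smul_left, real_inner_comm]
      field_simp
    rw [h3]
    positivity
  -- u₀ is nonzero
  have hu₀0 : u₀ ≠ 0 := by
    intro h
    have := hpos 0 (by simp; linarith) d₀ hd₀K hd₀0
    rw [h] at this
    simp at this
  -- the perturbation vector
  set w : Euc 2 := (ε / (2 * ‖perp u₀‖)) • perp u₀ with hw
  have hpn : (0:ℝ) < ‖perp u₀‖ := norm_pos_iff.2 (perp_ne_zero hu₀0)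
  have hwn : ‖w‖ = ε/2 := by
    rw [hw, norm_smul, Real.norm_eq_abs, abs_of_pos (by positivity)]
    field_simp
  refine ⟨-(u₀ + w), -(u₀ - w), ?_, ?_, ?_⟩
  · intro v h1 h2
    rw [inner_neg_left] at h1 h2
    have h1' : ⟪u₀ + w, v⟫ = 0 := by linarith
    have h2' : ⟪u₀ - w, v⟫ = 0 := by linarith
    rw [inner_add_left] at h1'
    rw [inner_sub_left] at h2'
    have hu0v : ⟪u₀, v⟫ = 0 := by linarith
    have hwv : ⟪w, v⟫ = 0 := by linarith
    rw [hw, real_inner_smul_left] at hwv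
    have hc : ε / (2 * ‖perp u₀‖) ≠ 0 := by positivity
    exact perp_spans hu₀0 hu0v (by
      rcases mul_eq_zero.1 hwv with h | h
      · exact absurd h hc
      · exact h)
  · refine hbdd _ (fun d hd hd0 => ?_)
    rw [neg_neg]
    exact hpos w hwn.le d hd hd0
  · refine hbdd _ (fun d hd hd0 => ?_)
    rw [neg_neg, sub_eq_add_neg]
    exact hpos (-w) (by rw [norm_neg, hwn]) d hd hd0

/-- For any open convex set `Ω₀ ⊆ ℝ²` that contains no line and any
`δ > 0`, there is a `C²`-smooth function `E_δ` defined on an open set containing `cl Ω₀`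
whose Hessian is strictly negative definite at every point of `cl Ω₀` (the second derivative
in every nonzero direction is negative), and which satisfies `0 < E_δ < δ` on `cl Ω₀`. -/
theorem stmt19 (Ω₀ : Set (Euc 2)) (h0open : IsOpen Ω₀) (h0conv : Convex ℝ Ω₀)
    (h0line : ContainsNoLine Ω₀) (δ : ℝ) (hδ : 0 < δ) :
    ∃ (U : Set (Euc 2)) (Eδ : Euc 2 → ℝ), IsOpen U ∧ closure Ω₀ ⊆ U ∧
      ContDiffOn ℝ 2 Eδ U ∧
      (∀ x ∈ closure Ω₀, ∀ v : Euc 2, v ≠ 0 →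
        deriv (deriv fun t : ℝ => Eδ (x + t • v)) 0 < 0) ∧
      (∀ x ∈ closure Ω₀, 0 < Eδ x ∧ Eδ x < δ) := by
  rcases Ω₀.eq_empty_or_nonempty with rfl | ⟨x₀, hx₀⟩
  · refine ⟨∅, 0, isOpen_empty, by simp, ?_, by simp, by simp⟩
    exact contDiff_const.contDiffOn
  obtain ⟨u₁, u₂, hspan, hb₁, hb₂⟩ := lemB h0open h0conv h0line hx₀
  obtain ⟨M₁, hM₁⟩ := hb₁
  obtain ⟨M₂, hM₂⟩ := hb₂
  have hcl : ∀ (u : Euc 2) (M : ℝ), (M ∈ upperBounds ((fun x => ⟪u, x⟫) '' Ω₀)) →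
      ∀ x ∈ closure Ω₀, ⟪u, x⟫ ≤ M := by
    intro u M hM x hx
    have hsub : Ω₀ ⊆ {x : Euc 2 | ⟪u, x⟫ ≤ M} := fun z hz => hM ⟨z, hz, rfl⟩
    have hclosed : IsClosed {x : Euc 2 | ⟪u, x⟫ ≤ M} :=
      isClosed_le (Continuous.inner continuous_const continuous_id) continuous_const
    exact closure_minimal hsub hclosed hx
  have hcl₁ := hcl u₁ M₁ hM₁
  have hcl₂ := hcl u₂ M₂ hM₂
  set E : Euc 2 → ℝ :=
    fun x => δ/4 * (2 - Real.exp (⟪u₁, x⟫ - (M₁+1)) - Real.exp (⟪u₂, x⟫ - (M₂+1))) with hE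
  have hinner : ∀ u : Euc 2, ContDiff ℝ 2 (fun x : Euc 2 => ⟪u, x⟫) := fun u =>
    ContDiff.inner ℝ contDiff_const contDiff_id
  refine ⟨univ, E, isOpen_univ, subset_univ _, ?_, ?_, ?_⟩
  · refine ContDiff.contDiffOn ?_
    exact contDiff_const.mul ((contDiff_const.sub
        (Real.contDiff_exp.comp ((hinner u₁).sub contDiff_const))).sub
        (Real.contDiff_exp.comp ((hinner u₂).sub contDiff_const)))
  · intro x hx v hv
    have hfun : (fun t : ℝ => E (x + t • v))
        = fun t : ℝ => δ/4 * (2 - Real.exp (⟪u₁,v⟫*t + (⟪u₁,x⟫ - (M₁+1)))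
            - Real.exp (⟪u₂,v⟫*t + (⟪u₂,x⟫ - (M₂+1)))) := by
      funext t
      rw [hE]
      simp only [inner_add_right, real_inner_smul_right]
      ring_nf
    rw [hfun, second_deriv_formula]
    have ha : ⟪u₁,v⟫ ≠ 0 ∨ ⟪u₂,v⟫ ≠ 0 := by
      by_contra h
      push_neg at h
      exact hv (hspan v h.1 h.2)
    have hpos : 0 < ⟪u₁,v⟫^2 * Real.exp (⟪u₁,x⟫ - (M₁+1))
        + ⟪u₂,v⟫^2 * Real.exp (⟪u₂,x⟫ - (M₂+1)) := by
      rcases ha with h | h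
      · have := Real.exp_pos (⟪u₁,x⟫ - (M₁+1))
        have := Real.exp_pos (⟪u₂,x⟫ - (M₂+1))
        nlinarith [sq_nonneg ⟪u₂,v⟫, pow_pos (abs_pos.2 h) 2, sq_abs ⟪u₁,v⟫]
      · have := Real.exp_pos (⟪u₁,x⟫ - (M₁+1))
        have := Real.exp_pos (⟪u₂,x⟫ - (M₂+1))
        nlinarith [sq_nonneg ⟪u₁,v⟫, pow_pos (abs_pos.2 h) 2, sq_abs ⟪u₂,v⟫]
    nlinarith [hpos]
  · intro x hx
    have h1 : Real.exp (⟪u₁, x⟫ - (M₁+1)) < 1 :=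
      Real.exp_lt_one_iff.2 (by have := hcl₁ x hx; linarith)
    have h2 : Real.exp (⟪u₂, x⟫ - (M₂+1)) < 1 :=
      Real.exp_lt_one_iff.2 (by have := hcl₂ x hx; linarith)
    have p1 := Real.exp_pos (⟪u₁, x⟫ - (M₁+1))
    have p2 := Real.exp_pos (⟪u₂, x⟫ - (M₂+1))
    constructor
    · rw [hE]; nlinarith
    · rw [hE]; nlinarith
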